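/- Define, for each subset h of a finite set K, the subspace U_h = W_h ∩ (∑_{h' ⊊ h} W_{h'})^⊥ of ℝ^I with the standard inner product. Then for distinct subsets h ≠ h' of K, the subspaces U_h and U_{h'} are orthogonal. -/

import Mathlib

open scoped RealInnerProductSpace

variable {K : Type*} [Fintype K] [DecidableEq K]

/-- The subspace `W h` of `ℝ^I` (with `I = ∏ k, Fin (I k)`, standard inner product)
consisting of functions depending only on the coordinates indexed by `h`. -/
def cellW (I : K → ℕ) (h : Finset K) :
    Submodule ℝ (EuclideanSpace ℝ (∀ k, Fin (I k))) where
  carrier := {f | ∀ i j : ∀ k, Fin (I k), (∀ k ∈ h, i k = j k) → f i = f j}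
  add_mem' := by
    intro f g hf hg i j hij
    simp only [PiLp.add_apply, hf i j hij, hg i j hij]
  zero_mem' := by intro i j _; rfl
  smul_mem' := by
    intro c f hf i j hij
    simp only [PiLp.smul_apply, hf i j hij]

/-- The interaction subspace `U h = W h ∩ (∑_{h' ⊊ h} W h')ᗮ`. -/
noncomputable def cellU (I : K → ℕ) (h : Finset K) :
    Submodule ℝ (EuclideanSpace ℝ (∀ k, Fin (I k))) :=
  cellW I h ⊓ (⨆ h' ∈ h.ssubsets, cellW I h')ᗮ

/-- Auxiliary lemma: the orthogonality under the asymmetric hypothesis `¬ h' ⊆ h`. -/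
theorem cellU_orthogonal_aux (I : K → ℕ) (h h' : Finset K) (hss : ¬ h' ⊆ h) :
    ∀ x ∈ cellU I h, ∀ y ∈ cellU I h', ⟪x, y⟫ = 0 := by
  classical
  intro x hx y hy
  obtain ⟨hx1, hx2⟩ := hx
  obtain ⟨hy1, hy2⟩ := hy
  set s : Finset K := h \ h' with hs
  set m : (∀ k, Fin (I k)) → (∀ k, Fin (I k)) → (∀ k, Fin (I k)) :=
    fun i j k => if k ∈ s then j k else i k with hm
  set Sx : EuclideanSpace ℝ (∀ k, Fin (I k)) := WithLp.toLp 2 (fun i => ∑ j, x (m i j)) with hSx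
  -- Sx belongs to W (h ∩ h')
  have hSx_mem : Sx ∈ cellW I (h ∩ h') := by
    intro i i' hii
    refine Finset.sum_congr rfl fun j _ => ?_
    apply hx1
    intro k hk
    by_cases hks : k ∈ s
    · simp [hm, hks]
    · simp only [hm, if_neg hks]
      have hk' : k ∈ h' := by
        by_contra hk'
        exact hks (Finset.mem_sdiff.mpr ⟨hk, hk'⟩)
      exact hii k (Finset.mem_inter.mpr ⟨hk, hk'⟩)
  -- h ∩ h' is a proper subset of h'
  have hmem : h ∩ h' ∈ h'.ssubsets := by
    rw [Finset.mem_ssubsets]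
    refine ⟨Finset.inter_subset_right, fun hcon => ?_⟩
    exact hss fun a ha => (Finset.mem_inter.mp (hcon ha)).1
  have hle : cellW I (h ∩ h') ≤ ⨆ h'' ∈ h'.ssubsets, cellW I h'' :=
    le_iSup₂ (f := fun h'' (_ : h'' ∈ h'.ssubsets) => cellW I h'') (h ∩ h') hmem
  have h0 : ⟪Sx, y⟫ = 0 := (Submodule.mem_orthogonal _ y).mp hy2 Sx (hle hSx_mem)
  -- compute ⟪Sx, y⟫
  have hinner : ∀ u v : EuclideanSpace ℝ (∀ k, Fin (I k)), ⟪u, v⟫ = ∑ i, u i * v i := by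
    intro u v
    simp [PiLp.inner_apply, RCLike.inner_apply, conj_trivial, mul_comm]
  -- involution
  have hmm : ∀ i j, m (m i j) (m j i) = i := by
    intro i j
    funext k
    by_cases hk : k ∈ s <;> simp [hm, hk]
  let e : ((∀ k, Fin (I k)) × (∀ k, Fin (I k))) ≃ ((∀ k, Fin (I k)) × (∀ k, Fin (I k))) :=
    ⟨fun p => (m p.1 p.2, m p.2 p.1), fun p => (m p.1 p.2, m p.2 p.1),
      fun p => by simp [hmm], fun p => by simp [hmm]⟩
  have key : ⟪Sx, y⟫ = (Fintype.card (∀ k, Fin (I k)) : ℝ) * ⟪x, y⟫ := by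
    rw [hinner, hinner]
    have step1 : ∀ i j, x (m i j) * y i = x (m i j) * y (m i j) := by
      intro i j
      congr 1
      refine (hy1 (m i j) i fun k hk => ?_).symm
      have hks : k ∉ s := fun hcon => (Finset.mem_sdiff.mp hcon).2 hk
      simp [hm, hks]
    calc ∑ i, Sx i * y i = ∑ i, ∑ j, x (m i j) * y (m i j) := by
            simp only [hSx, Finset.sum_mul]
            exact Finset.sum_congr rfl fun i _ => Finset.sum_congr rfl fun j _ => step1 i j
      _ = ∑ p : (∀ k, Fin (I k)) × (∀ k, Fin (I k)), x (m p.1 p.2) * y (m p.1 p.2) := by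
            rw [Fintype.sum_prod_type]
      _ = ∑ p : (∀ k, Fin (I k)) × (∀ k, Fin (I k)), x p.1 * y p.1 := by
            exact Fintype.sum_equiv e (fun p => x (m p.1 p.2) * y (m p.1 p.2))
              (fun p => x p.1 * y p.1) (fun p => rfl)
      _ = (Fintype.card (∀ k, Fin (I k)) : ℝ) * ∑ i, x i * y i := by
            rw [Fintype.sum_prod_type_right]
            simp [Finset.sum_const, mul_comm, Finset.mul_sum]
  rw [key] at h0
  rcases mul_eq_zero.mp h0 with hc | hxy
  · -- card = 0, so the index type is empty and the inner product is 0
    have : IsEmpty (∀ k, Fin (I k)) := by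
      rw [← Fintype.card_eq_zero_iff]
      exact_mod_cast hc
    rw [hinner]
    simp
  · exact hxy

/-- For distinct subsets `h ≠ h'` of `K`, the interaction subspaces `U h` and `U h'`
are orthogonal. -/
theorem cellU_orthogonal (I : K → ℕ) (h h' : Finset K) (hne : h ≠ h') :
    ∀ x ∈ cellU I h, ∀ y ∈ cellU I h', ⟪x, y⟫ = 0 := by
  by_cases hss : h' ⊆ h
  · have hss' : ¬ h ⊆ h' := fun hcon => hne (Finset.Subset.antisymm hcon hss)
    intro x hx y hy
    rw [real_inner_comm]
    exact cellU_orthogonal_aux I h' h hss' y hy x hx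
  · exact cellU_orthogonal_aux I h h' hss
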